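/- Write the minimal polynomial of t^{−1} over the subfield ν(ℰ) as Q(X) = X^p + ν(a_1)X^{p−1} + ⋯ + ν(a_p) with a_1, …, a_p ∈ ℰ (this is possible since ν is injective and ℰ has degree p over ν(ℰ)). Then a_p ∈ t^{−1}·ℬ, and for each 1 ≤ i ≤ p−1 one has a_i ∈ p·t^{−i}·ℬ. -/

import Mathlib

open Filter Topology

noncomputable section

namespace AmiceStmt

variable {L : Type*} [NormedField L]

/-- The multiplication (coefficientwise convolution) of the Amice ring `ℰ` over `L`,
written on coefficient functions `ℤ → L`. -/
def mulE (x y : ℤ → L) : ℤ → L := fun n => ∑' k : ℤ, x k * y (n - k)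

/-- `x : ℤ → L` is the coefficient function of an element of the Amice ring `ℰ`:
the norms of the coefficients are bounded above (`v_p` bounded below), and
`‖x n‖ → 0` (`v_p(x n) → ∞`) as `n → -∞`. -/
def IsE (x : ℤ → L) : Prop :=
  (∃ C : ℝ, ∀ n : ℤ, ‖x n‖ ≤ C) ∧
    ∀ ε : ℝ, 0 < ε → ∃ N : ℤ, ∀ n : ℤ, n ≤ N → ‖x n‖ ≤ ε

/-- Membership in `𝒪_ℰ^m(b)`: an element of `ℰ` with integral coefficients
(`‖x n‖ ≤ 1`) satisfying the partial valuation condition `w_k(x) ≥ -k*m - b`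
for every `k : ℚ`, where `v_p(x n) ≤ k ↔ p^(-k) ≤ ‖x n‖`. -/
def MemOE (p : ℕ) (m b : ℝ) (x : ℤ → L) : Prop :=
  IsE x ∧ (∀ n : ℤ, ‖x n‖ ≤ 1) ∧
    ∀ (k : ℚ) (n : ℤ), (p : ℝ) ^ (-(k : ℝ)) ≤ ‖x n‖ → -(k : ℝ) * m - b ≤ (n : ℝ)

/-- The unit `1` of the Amice ring. -/
def oneE : ℤ → L := fun n => if n = 0 then 1 else 0

/-- The parameter `t` of the Amice ring. -/
def tE : ℤ → L := fun n => if n = 1 then 1 else 0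

/-- The monomial `t^k`, `k : ℤ`. -/
def tpowE (k : ℤ) : ℤ → L := fun n => if n = k then 1 else 0

/-- The constant (element of `L`) `a`, viewed in the Amice ring. -/
def constE (a : L) : ℤ → L := fun n => if n = 0 then a else 0

/-- Powers in the Amice ring. -/
def powE (x : ℤ → L) : ℕ → ℤ → L
  | 0 => oneE
  | n + 1 => mulE x (powE x n)

/-- Integer powers of a unit `x` of the Amice ring with inverse `xinv`. -/
def zpowE (x xinv : ℤ → L) (n : ℤ) : ℤ → L :=
  if 0 ≤ n then powE x n.toNat else powE xinv (-n).toNat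

/-- Membership in the bounded overconvergent ring `ℰ†`: an element of `ℰ` such that
there is `c > 0` with `v_p(x n) ≥ -c*n` (i.e. `‖x n‖ ≤ p^(c*n)`) for `n` sufficiently
negative. -/
def IsEdag (p : ℕ) (x : ℤ → L) : Prop :=
  IsE x ∧ ∃ c : ℝ, 0 < c ∧ ∃ N : ℤ, ∀ n : ℤ, n ≤ N → ‖x n‖ ≤ (p : ℝ) ^ (c * (n : ℝ))

/-- Membership in `𝒪_{ℰ†} = 𝒪_ℰ ∩ ℰ†`. -/
def IsOEdag (p : ℕ) (x : ℤ → L) : Prop := IsEdag p x ∧ ∀ n : ℤ, ‖x n‖ ≤ 1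

/-- A `p`-Frobenius endomorphism `ν` of `ℰ†` (over the normed field `K`): a ring
endomorphism of `ℰ†` preserving `𝒪_{ℰ†}`, extending a valuation-preserving field
automorphism `autL` of `K`, congruent to the `p`-th power map modulo the maximal ideal,
sending `t` to a unit of `ℰ†`, and acting on Laurent series by the coefficientwise
convergent formula `ν(∑ aₙ tⁿ) = ∑ aₙ^ν (ν t)ⁿ`. -/
structure PFrob (p : ℕ) (K : Type*) [NormedField K] where
  toFun : (ℤ → K) → ℤ → K
  autL : K ≃+* K
  autL_norm : ∀ a : K, ‖autL a‖ = ‖a‖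
  tInv : ℤ → K
  maps_Edag : ∀ x : ℤ → K, IsEdag p x → IsEdag p (toFun x)
  maps_OEdag : ∀ x : ℤ → K, IsOEdag p x → IsOEdag p (toFun x)
  map_add' : ∀ x y : ℤ → K, IsEdag p x → IsEdag p y → toFun (x + y) = toFun x + toFun y
  map_mul' : ∀ x y : ℤ → K, IsEdag p x → IsEdag p y →
    toFun (mulE x y) = mulE (toFun x) (toFun y)
  map_one' : toFun oneE = oneE
  map_const' : ∀ a : K, toFun (constE a) = constE (autL a)
  frob_mod' : ∀ x : ℤ → K, IsOEdag p x → ∀ n : ℤ, ‖(toFun x - powE x p) n‖ < 1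
  tInv_mem : IsEdag p tInv
  t_unit : mulE (toFun tE) tInv = oneE
  expansion : ∀ x : ℤ → K, IsEdag p x → ∀ j : ℤ,
    toFun x j = ∑' n : ℤ, autL (x n) * zpowE (toFun tE) tInv n j

/-- The `U_p` operator for the `p`-Frobenius `t ↦ t^p`:
`U_p(∑ aₙ tⁿ) = ∑ (a_{pn})^{ν⁻¹} tⁿ`. -/
def UpT1 (p : ℕ) (autL : L ≃+* L) (x : ℤ → L) : ℤ → L :=
  fun n => autL.symm (x ((p : ℤ) * n))

/-- The generalized binomial coefficient `C(r, n)` in `L`. -/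
def lbinom (r : L) (n : ℕ) : L := (∏ i ∈ Finset.range n, (r - (i : L))) / (n.factorial : L)

/-- The element `y ∈ ℰ` with `1 + p y = t^{-p(p-1)}((t^{p-1}+1)^p - 1)`, i.e.
`y = ∑_{i=1}^{p-1} (C(p,i)/p) t^{(p-1)(i-p)}`. -/
def yF (p : ℕ) : ℤ → L := fun j =>
  ∑ i ∈ Finset.Ico 1 p,
    if j = ((p : ℤ) - 1) * ((i : ℤ) - (p : ℤ)) then (p.choose i : L) / (p : L) else 0

/-- The element `F = t^p ∑_{n ≥ 0} C(1/(p-1), n) pⁿ yⁿ ∈ ℰ`, the `(p-1)`-st root of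
`(t^{p-1}+1)^p - 1` congruent to `t^p` mod `𝔪 𝒪_ℰ`. -/
def FE (p : ℕ) : ℤ → L := fun j =>
  ∑' n : ℕ, lbinom (((p : L) - 1)⁻¹) n * (p : L) ^ n * powE (yF p) n (j - (p : ℤ))

/-- The element `(t^{p-1}+1)^p - 1` of `ℰ`. -/
def GE (p : ℕ) : ℤ → L := fun j =>
  ∑ i ∈ Finset.Icc 1 p, if j = ((p : ℤ) - 1) * (i : ℤ) then (p.choose i : L) else 0

/-- The `p`-Frobenius endomorphism `ν` of `ℰ` with `ν(t) = F` (type 2 Frobenius,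
`t ↦ (p-1)-th root of (t^{p-1}+1)^p - 1`), given on Laurent series by
`ν(∑ aₙ tⁿ) = ∑ aₙ^ν Fⁿ`; `Finv` is the inverse of `F` in `ℰ`. -/
def nuF (p : ℕ) (autL : L ≃+* L) (Finv : ℤ → L) (x : ℤ → L) : ℤ → L :=
  fun j => ∑' n : ℤ, autL (x n) * zpowE (FE p) Finv n j

/-- Membership in `ℬ = { ∑ aₙ t^{(p-1)n} : aₙ ∈ 𝒪_L, v_p(aₙ) ≥ max(0, -n) }`. -/
def MemB (p : ℕ) (z : ℤ → L) : Prop :=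
  IsE z ∧ (∀ j : ℤ, ¬ ((p : ℤ) - 1 ∣ j) → z j = 0) ∧
    ∀ n : ℤ, ‖z (((p : ℤ) - 1) * n)‖ ≤ (p : ℝ) ^ (-(max 0 (-n)) : ℤ)

/-- Membership in `𝒜 = t⁻¹ℬ + t⁻²ℬ + ⋯ + t^{-(p-1)}ℬ`. -/
def MemA (p : ℕ) (x : ℤ → L) : Prop :=
  ∃ z : ℕ → ℤ → L, (∀ i : ℕ, MemB p (z i)) ∧
    x = fun m => ∑ i ∈ Finset.Icc 1 (p - 1), z i (m + (i : ℤ))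

/-- The exponent `a(n) = ⌊(n-1)/(p-1)⌋` for `n ≥ 1` (and `0` for `n ≤ 0`). -/
def aExp (p : ℕ) (n : ℤ) : ℤ := if 1 ≤ n then (n - 1) / ((p : ℤ) - 1) else 0


/-! ### Auxiliary infrastructure for statement 6 -/

section Aux

variable {p : ℕ}

/-- `CL p s = ⌈s / (p-1)⌉`. -/
def CL (p s : ℕ) : ℕ := (s + p - 2) / (p - 1)

lemma CL_le_iff (hp3 : 3 ≤ p) {s k : ℕ} : CL p s ≤ k ↔ s ≤ (p - 1) * k := by
  unfold CL
  rw [Nat.div_le_iff_le_mul_add_pred (by omega : 0 < p - 1)]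
  generalize (p - 1) * k = m
  omega

lemma CL_zero (hp3 : 3 ≤ p) : CL p 0 = 0 := by
  have := (CL_le_iff hp3 (s := 0) (k := 0)).2 (by omega)
  omega

lemma lt_CL_iff (hp3 : 3 ≤ p) {s k : ℕ} : k < CL p s ↔ (p - 1) * k < s := by
  rw [← not_le, ← not_le, CL_le_iff hp3]

lemma one_le_CL (hp3 : 3 ≤ p) {s : ℕ} (hs : 1 ≤ s) : 1 ≤ CL p s := by
  rw [show (1 : ℕ) = 0 + 1 from rfl, Nat.add_one_le_iff, lt_CL_iff hp3]
  omega

lemma le_CL_self (hp3 : 3 ≤ p) (s : ℕ) : s ≤ (p - 1) * CL p s :=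
  (CL_le_iff hp3).1 le_rfl

lemma CL_add_le (hp3 : 3 ≤ p) (s1 s2 : ℕ) : CL p (s1 + s2) ≤ CL p s1 + CL p s2 := by
  rw [CL_le_iff hp3, Nat.mul_add]
  exact Nat.add_le_add (le_CL_self hp3 s1) (le_CL_self hp3 s2)

variable {L : Type*} [NormedField L] [IsUltrametricDist L]

lemma aux_tsum_zero {ι : Type*} {f : ι → L} (h : ∀ i, f i = 0) : ∑' i, f i = 0 := by
  rw [show f = fun _ => (0 : L) from funext h]
  exact tsum_zero

lemma aux_norm_tsum_le {ι : Type*} {f : ι → L} {B : ℝ} (hB : 0 ≤ B) (h : ∀ i, ‖f i‖ ≤ B) :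
    ‖∑' i, f i‖ ≤ B :=
  IsUltrametricDist.norm_tsum_le_of_forall_le_of_nonneg hB h

lemma aux_summable [CompleteSpace L] {f : ℤ → L}
    (h : ∀ ε : ℝ, 0 < ε → ∃ s : Finset ℤ, ∀ n ∉ s, ‖f n‖ ≤ ε) : Summable f := by
  rw [summable_iff_vanishing]
  intro e he
  rcases Metric.mem_nhds_iff.mp he with ⟨ε, hε, hb⟩
  obtain ⟨s, hs⟩ := h (ε / 2) (by linarith)
  refine ⟨s, fun t ht => hb ?_⟩
  have : ‖∑ b ∈ t, f b‖ ≤ ε / 2 := by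
    refine IsUltrametricDist.norm_sum_le_of_forall_le_of_nonneg (by linarith) fun i hi => ?_
    exact hs i (Finset.disjoint_left.mp ht hi)
  simpa [Metric.mem_ball, dist_zero_right] using lt_of_le_of_lt this (by linarith)

lemma aux_le_limit {c t C r : ℝ} (ht : 0 ≤ t) (hr0 : 0 ≤ r) (hr1 : r < 1)
    (h : ∀ k : ℕ, c ≤ max t (C * r ^ k)) : c ≤ t := by
  have h1 : Filter.Tendsto (fun k : ℕ => C * r ^ k) Filter.atTop (nhds 0) := by
    simpa using (tendsto_pow_atTop_nhds_zero_of_lt_one hr0 hr1).const_mul C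
  have h2 : Filter.Tendsto (fun k : ℕ => max t (C * r ^ k)) Filter.atTop (nhds (max t 0)) :=
    tendsto_const_nhds.max h1
  have := ge_of_tendsto h2 (Filter.Eventually.of_forall h)
  rwa [max_eq_left ht] at this

lemma aux_one_lt_p (hp3 : 3 ≤ p) : (1 : ℝ) < p := by exact_mod_cast (by omega : 1 < p)

lemma aux_p_pos (hp3 : 3 ≤ p) : (0 : ℝ) < p := lt_trans one_pos (aux_one_lt_p hp3)

lemma aux_wt_le_one (hp3 : 3 ≤ p) (e : ℤ) (he : 0 ≤ e) : (p : ℝ) ^ (-e) ≤ 1 := by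
  have := zpow_le_zpow_right₀ (le_of_lt (aux_one_lt_p hp3)) (by omega : -e ≤ 0)
  simpa using this

lemma aux_wt_pos (hp3 : 3 ≤ p) (e : ℤ) : (0 : ℝ) < (p : ℝ) ^ e :=
  zpow_pos (aux_p_pos hp3) e

lemma aux_wt_mul (hp3 : 3 ≤ p) (x y : ℤ) :
    (p : ℝ) ^ (-x) * (p : ℝ) ^ (-y) = (p : ℝ) ^ (-(x + y)) := by
  rw [← zpow_add₀ (ne_of_gt (aux_p_pos hp3))]
  ring_nf

lemma aux_wt_mono (hp3 : 3 ≤ p) {x y : ℤ} (h : x ≤ y) :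
    (p : ℝ) ^ (-y) ≤ (p : ℝ) ^ (-x) :=
  zpow_le_zpow_right₀ (le_of_lt (aux_one_lt_p hp3)) (by omega)

end Aux

section Nice

set_option linter.unusedSectionVars false

variable {p : ℕ} {L : Type*} [NormedField L] [IsUltrametricDist L]

/-- An element of `ℰ` supported on `c - (p-1)ℕ`, with top coefficient `1` and
coefficient at `c - (p-1)s` of valuation at least `⌈s/(p-1)⌉`. -/
def IsNice (p : ℕ) (c : ℤ) (x : ℤ → L) : Prop :=
  (∀ j, x j ≠ 0 → ∃ s : ℕ, j = c - ((p : ℤ) - 1) * s) ∧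
  x c = 1 ∧
  ∀ s : ℕ, ‖x (c - ((p : ℤ) - 1) * s)‖ ≤ (p : ℝ) ^ (-(CL p s : ℤ))

lemma IsNice.norm_le_one (hp3 : 3 ≤ p) {c : ℤ} {x : ℤ → L} (hx : IsNice p c x) (j : ℤ) :
    ‖x j‖ ≤ 1 := by
  by_cases h0 : x j = 0
  · simp [h0]
  · obtain ⟨s, rfl⟩ := hx.1 j h0
    exact le_trans (hx.2.2 s) (aux_wt_le_one hp3 _ (Int.natCast_nonneg _))

lemma aux_mulE_ne {x y : ℤ → L} {j : ℤ} (h : mulE x y j ≠ 0) :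
    ∃ k, x k ≠ 0 ∧ y (j - k) ≠ 0 := by
  by_contra hc
  push_neg at hc
  refine h (aux_tsum_zero fun k => ?_)
  by_cases hx0 : x k = 0
  · simp [hx0]
  · simp [hc k hx0]

lemma aux_summable_nice [CompleteSpace L] (hp3 : 3 ≤ p) {c : ℤ} {x g : ℤ → L} {C : ℝ}
    (hC : 0 ≤ C)
    (hsupp : ∀ k, x k ≠ 0 → ∃ s : ℕ, k = c - ((p : ℤ) - 1) * s)
    (hbnd : ∀ s : ℕ, ‖x (c - ((p : ℤ) - 1) * s)‖ ≤ (p : ℝ) ^ (-(CL p s : ℤ)))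
    (hg : ∀ j : ℤ, ‖g j‖ ≤ C) (m : ℤ) :
    Summable (fun k => x k * g (m - k)) := by
  apply aux_summable
  intro ε hε
  have hp1 : (0:ℝ) < (p:ℝ)⁻¹ := by positivity
  obtain ⟨K, hK⟩ := exists_pow_lt_of_lt_one (show (0:ℝ) < ε / (C + 1) by positivity)
    (show (p:ℝ)⁻¹ < 1 by rw [inv_lt_one₀ (aux_p_pos hp3)]; exact aux_one_lt_p hp3)
  refine ⟨Finset.Icc (c - ((p : ℤ) - 1) * (((p : ℤ) - 1) * (K : ℤ))) c, fun n hn => ?_⟩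
  by_cases hx0 : x n = 0
  · simp [hx0]; linarith
  obtain ⟨s, rfl⟩ := hsupp n hx0
  have hcast : ((p - 1 : ℕ) : ℤ) = (p : ℤ) - 1 := by omega
  have hsK : ¬ ((s : ℤ) ≤ ((p : ℤ) - 1) * (K : ℤ)) := by
    intro hsle
    apply hn
    rw [Finset.mem_Icc]
    constructor
    · have h3 : ((p : ℤ) - 1) * s ≤ ((p : ℤ) - 1) * (((p : ℤ) - 1) * (K : ℤ)) :=
        mul_le_mul_of_nonneg_left hsle (by omega)
      omega
    · have : (0:ℤ) ≤ ((p : ℤ) - 1) * s := mul_nonneg (by omega) (Int.natCast_nonneg s)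
      omega
  have hKCL : K ≤ CL p s := by
    by_contra hlt
    push_neg at hlt
    have h' : s ≤ (p - 1) * K := (CL_le_iff hp3).1 (by omega)
    refine hsK ?_
    have h2 : ((s : ℤ)) ≤ (((p - 1) * K : ℕ) : ℤ) := by exact_mod_cast h'
    rw [Nat.cast_mul, hcast] at h2
    exact h2
  calc ‖x (c - ((p : ℤ) - 1) * s) * g (m - (c - ((p : ℤ) - 1) * s))‖
      ≤ (p : ℝ) ^ (-(CL p s : ℤ)) * C := by
        rw [norm_mul]
        exact mul_le_mul (hbnd s) (hg _) (norm_nonneg _) (le_of_lt (aux_wt_pos hp3 _))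
    _ ≤ (p : ℝ) ^ (-(K : ℤ)) * C := by
        refine mul_le_mul_of_nonneg_right (aux_wt_mono hp3 ?_) hC
        exact_mod_cast hKCL
    _ = ((p:ℝ)⁻¹) ^ K * C := by
        rw [zpow_neg, zpow_natCast, inv_pow]
    _ ≤ (ε / (C + 1)) * (C + 1) := by
        refine mul_le_mul (le_of_lt hK) (by linarith) hC (by positivity)
    _ = ε := by field_simp

lemma IsNice.mul [CompleteSpace L] (hp3 : 3 ≤ p) {c d : ℤ} {x y : ℤ → L}
    (hx : IsNice p c x) (hy : IsNice p d y) : IsNice p (c + d) (mulE x y) := by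
  have hyb := hy.norm_le_one hp3
  refine ⟨?_, ?_, ?_⟩
  · intro j hj
    obtain ⟨k, hxk, hyk⟩ := aux_mulE_ne hj
    obtain ⟨s1, rfl⟩ := hx.1 _ hxk
    obtain ⟨s2, h2⟩ := hy.1 _ hyk
    refine ⟨s1 + s2, ?_⟩
    push_cast at h2 ⊢
    linarith
  · show (∑' k : ℤ, x k * y (c + d - k)) = 1
    have hfun : (fun k : ℤ => x k * y (c + d - k)) = fun k => if k = c then 1 else 0 := by
      funext k
      by_cases hk : k = c
      · rw [if_pos hk, hk, show c + d - c = d by ring, hx.2.1, hy.2.1, one_mul]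
      · rw [if_neg hk]
        by_cases hx0 : x k = 0
        · simp [hx0]
        obtain ⟨s1, rfl⟩ := hx.1 _ hx0
        have hs1 : s1 ≠ 0 := by
          rintro rfl
          simp at hk
        have hy0 : y (c + d - (c - ((p : ℤ) - 1) * s1)) = 0 := by
          by_contra hy0
          obtain ⟨s2, h2⟩ := hy.1 _ hy0
          have h5 : ((p : ℤ) - 1) * s1 + ((p : ℤ) - 1) * s2 = 0 := by linarith
          have h1 : (0:ℤ) < ((p : ℤ) - 1) * s1 := by
            have h6 : (0:ℤ) < (s1 : ℤ) := by exact_mod_cast Nat.pos_of_ne_zero hs1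
            exact mul_pos (by omega) h6
          have h2' : (0:ℤ) ≤ ((p : ℤ) - 1) * s2 := mul_nonneg (by omega) (Int.natCast_nonneg _)
          omega
        rw [hy0, mul_zero]
    rw [hfun]
    exact tsum_ite_eq c 1
  · intro s
    refine aux_norm_tsum_le (le_of_lt (aux_wt_pos hp3 _)) fun k => ?_
    by_cases hx0 : x k = 0
    · simp only [hx0, zero_mul, norm_zero]
      exact le_of_lt (aux_wt_pos hp3 _)
    obtain ⟨s1, rfl⟩ := hx.1 _ hx0
    by_cases hy0 : y (c + d - ((p : ℤ) - 1) * s - (c - ((p : ℤ) - 1) * s1)) = 0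
    · simp only [hy0, mul_zero, norm_zero]
      exact le_of_lt (aux_wt_pos hp3 _)
    obtain ⟨s2, h2⟩ := hy.1 _ hy0
    have hss : s1 + s2 = s := by
      have h3 : ((p : ℤ) - 1) * s = ((p : ℤ) - 1) * (s1 + s2) := by push_cast; linarith
      have h4 : (s : ℤ) = ((s1 + s2 : ℕ) : ℤ) := by
        have := mul_left_cancel₀ (show ((p : ℤ) - 1) ≠ 0 by omega) h3
        push_cast
        push_cast at this
        linarith
      exact_mod_cast h4.symm
    have hb1 := hx.2.2 s1
    have hb2 := hy.2.2 s2
    rw [show c + d - ((p : ℤ) - 1) * s - (c - ((p : ℤ) - 1) * s1) = d - ((p : ℤ) - 1) * s2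
      by rw [← hss]; push_cast; ring] at hy0 ⊢
    rw [norm_mul]
    calc ‖x (c - ((p : ℤ) - 1) * s1)‖ * ‖y (d - ((p : ℤ) - 1) * s2)‖
        ≤ (p : ℝ) ^ (-(CL p s1 : ℤ)) * (p : ℝ) ^ (-(CL p s2 : ℤ)) :=
          mul_le_mul hb1 hb2 (norm_nonneg _) (le_of_lt (aux_wt_pos hp3 _))
      _ = (p : ℝ) ^ (-((CL p s1 : ℤ) + (CL p s2 : ℤ))) := aux_wt_mul hp3 _ _
      _ ≤ (p : ℝ) ^ (-(CL p s : ℤ)) := by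
          refine aux_wt_mono hp3 ?_
          have := CL_add_le hp3 s1 s2
          rw [hss] at this
          exact_mod_cast this

lemma aux_nice_one (hp3 : 3 ≤ p) : IsNice p 0 (oneE : ℤ → L) := by
  refine ⟨fun j hj => ⟨0, ?_⟩, by simp [oneE], fun s => ?_⟩
  · by_contra hne
    exact hj (if_neg (by simpa using fun h => hne (by simp [h])))
  · rcases Nat.eq_zero_or_pos s with rfl | hs
    · simp [oneE, CL_zero hp3]
    · have hne : (0 : ℤ) - ((p : ℤ) - 1) * s ≠ 0 := by
        have h1 : (0:ℤ) < ((p : ℤ) - 1) * s := by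
          have h2 : (0:ℤ) < (s:ℤ) := by exact_mod_cast hs
          have h3 : (0:ℤ) < (p:ℤ) - 1 := by omega
          positivity
        omega
      simp only [oneE, if_neg hne, norm_zero]
      exact le_of_lt (aux_wt_pos hp3 _)

lemma IsNice.pow [CompleteSpace L] (hp3 : 3 ≤ p) {c : ℤ} {x : ℤ → L}
    (hx : IsNice p c x) (r : ℕ) : IsNice p (c * r) (powE x r) := by
  induction r with
  | zero => simpa [powE] using aux_nice_one hp3
  | succ r ih =>
      have := hx.mul hp3 ih
      rw [show c + c * r = c * ((r : ℤ) + 1) by ring] at this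
      simpa [powE, push_cast] using this
end Nice

section Lbinom

set_option linter.unusedSectionVars false

variable {p : ℕ} {L : Type*} [NormedField L] [IsUltrametricDist L]

lemma aux_tsum_ne {ι : Type*} {f : ι → L} (h : ∑' i, f i ≠ 0) : ∃ i, f i ≠ 0 := by
  by_contra hc
  push_neg at hc
  exact h (aux_tsum_zero hc)

lemma aux_norm_sub_le_max (x y : L) : ‖x - y‖ ≤ max ‖x‖ ‖y‖ := by
  simpa [sub_eq_add_neg, norm_neg] using IsUltrametricDist.norm_add_le_max x (-y)

lemma aux_charZero (hp3 : 3 ≤ p) (hpL : ‖(p : L)‖ = (p : ℝ)⁻¹) : CharZero L := by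
  obtain ⟨r, hr⟩ := CharP.exists L
  rcases CharP.char_is_prime_or_zero L r with hrp | hr0
  · exfalso
    haveI := Fact.mk hrp
    have hinv1 : (p : ℝ)⁻¹ < 1 := by
      rw [inv_lt_one₀ (aux_p_pos hp3)]; exact aux_one_lt_p hp3
    by_cases hdvd : r ∣ p
    · have hzero : (p : L) = 0 := by
        obtain ⟨c, hc⟩ := hdvd
        rw [hc, Nat.cast_mul, CharP.cast_eq_zero L r, zero_mul]
      rw [hzero, norm_zero] at hpL
      have := aux_p_pos hp3
      rw [← hpL] at hinv1
      norm_num at hpL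
      exact absurd hpL.symm (by positivity)
    · have hpz : (p : ZMod r) ≠ 0 := by
        rw [Ne, ZMod.natCast_eq_zero_iff]
        exact hdvd
      have h1 : ((p : ZMod r)) ^ (r - 1) = 1 := ZMod.pow_card_sub_one_eq_one hpz
      have h2 : ((p : L)) ^ (r - 1) = 1 := by
        have := congrArg (ZMod.castHom (dvd_refl r) L) h1
        simpa using this
      have h3 : ((p : ℝ)⁻¹) ^ (r - 1) = 1 := by
        have := congrArg (‖·‖) h2
        simpa [norm_pow, hpL] using this
      have h4 : ((p : ℝ)⁻¹) ^ (r - 1) < 1 :=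
        pow_lt_one₀ (by positivity) hinv1 (by have := hrp.two_le; omega)
      rw [h3] at h4
      exact lt_irrefl _ h4
  · rw [hr0] at hr
    exact CharP.charP_to_charZero L

lemma aux_norm_pm1 (hp3 : 3 ≤ p) (hpL : ‖(p : L)‖ = (p : ℝ)⁻¹) : ‖(p : L) - 1‖ = 1 := by
  have hinv1 : (p : ℝ)⁻¹ < 1 := by
    rw [inv_lt_one₀ (aux_p_pos hp3)]; exact aux_one_lt_p hp3
  refine le_antisymm ?_ ?_
  · refine le_trans (aux_norm_sub_le_max _ _) ?_
    rw [hpL, norm_one]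
    exact max_le (le_of_lt hinv1) le_rfl
  · by_contra hlt
    push_neg at hlt
    have h1 : (1 : ℝ) = ‖(1 : L)‖ := norm_one.symm
    have h2 : ‖(1 : L)‖ ≤ max ‖(p : L)‖ ‖(p : L) - 1‖ := by
      calc ‖(1 : L)‖ = ‖(p : L) - ((p : L) - 1)‖ := by ring_nf
        _ ≤ max ‖(p : L)‖ ‖(p : L) - 1‖ := aux_norm_sub_le_max _ _
    rw [norm_one, hpL] at h2
    rcases max_cases ((p : ℝ)⁻¹) ‖(p : L) - 1‖ with ⟨he, _⟩ | ⟨he, _⟩ <;> rw [he] at h2 <;>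
      linarith

lemma aux_pm1_ne (hp3 : 3 ≤ p) (hpL : ‖(p : L)‖ = (p : ℝ)⁻¹) : ((p : L) - 1) ≠ 0 := by
  intro h
  have := aux_norm_pm1 hp3 hpL (L := L)
  rw [h, norm_zero] at this
  norm_num at this

lemma aux_prod_desc (N : ℤ) (n : ℕ) :
    ∏ i ∈ Finset.range n, (N - (i : ℤ)) = (descPochhammer ℤ n).eval N := by
  induction n with
  | zero => simp [descPochhammer_zero]
  | succ n ih => rw [Finset.prod_range_succ, descPochhammer_succ_eval, ih]

lemma aux_factorial_dvd (N : ℤ) (n : ℕ) :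
    ∃ D : ℤ, ∏ i ∈ Finset.range n, (N - (i : ℤ)) = (n.factorial : ℤ) * D := by
  refine ⟨Ring.choose N n, ?_⟩
  rw [aux_prod_desc, Polynomial.eval_eq_smeval, Ring.descPochhammer_eq_factorial_smul_choose]
  simp [nsmul_eq_mul]

lemma aux_norm_prod_le_one {u : ℕ → L} (hu : ∀ i, ‖u i‖ ≤ 1) (n : ℕ) :
    ‖∏ i ∈ Finset.range n, u i‖ ≤ 1 := by
  rw [norm_prod]
  exact Finset.prod_le_one (fun i _ => norm_nonneg _) (fun i _ => hu i)

lemma aux_prod_diff {u v : ℕ → L} {δ : ℝ} (hδ : 0 ≤ δ) (hu : ∀ i, ‖u i‖ ≤ 1)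
    (hv : ∀ i, ‖v i‖ ≤ 1) (hd : ∀ i, ‖u i - v i‖ ≤ δ) (n : ℕ) :
    ‖∏ i ∈ Finset.range n, u i - ∏ i ∈ Finset.range n, v i‖ ≤ δ := by
  induction n with
  | zero => simpa using hδ
  | succ n ih =>
      rw [Finset.prod_range_succ, Finset.prod_range_succ]
      have key : (∏ i ∈ Finset.range n, u i) * u n - (∏ i ∈ Finset.range n, v i) * v n
          = (∏ i ∈ Finset.range n, u i) * (u n - v n)
            + (∏ i ∈ Finset.range n, u i - ∏ i ∈ Finset.range n, v i) * v n := by ring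
      rw [key]
      refine le_trans (IsUltrametricDist.norm_add_le_max _ _) (max_le ?_ ?_)
      · rw [norm_mul]
        calc ‖∏ i ∈ Finset.range n, u i‖ * ‖u n - v n‖ ≤ 1 * δ :=
              mul_le_mul (aux_norm_prod_le_one hu n) (hd n) (norm_nonneg _) zero_le_one
          _ = δ := one_mul δ
      · rw [norm_mul]
        calc ‖∏ i ∈ Finset.range n, u i - ∏ i ∈ Finset.range n, v i‖ * ‖v n‖ ≤ δ * 1 :=
              mul_le_mul ih (hv n) (norm_nonneg _) hδ
          _ = δ := mul_one δ

lemma aux_lbinom_int [CharZero L] (N : ℤ) (n : ℕ) : ‖lbinom ((N : ℤ) : L) n‖ ≤ 1 := by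
  obtain ⟨D, hD⟩ := aux_factorial_dvd N n
  have hnf : ((n.factorial : ℕ) : L) ≠ 0 := Nat.cast_ne_zero.2 (Nat.factorial_ne_zero n)
  have hcast : ∏ i ∈ Finset.range n, (((N : ℤ) : L) - (i : ℕ))
      = (((∏ i ∈ Finset.range n, (N - (i : ℤ))) : ℤ) : L) := by
    push_cast
    rfl
  have : lbinom ((N : ℤ) : L) n = ((D : ℤ) : L) := by
    unfold lbinom
    rw [hcast, hD]
    push_cast
    rw [mul_comm]
    exact mul_div_cancel_right₀ _ hnf
  rw [this]
  exact IsUltrametricDist.norm_intCast_le_one L D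

lemma aux_lbinom_norm (hp3 : 3 ≤ p) (hpL : ‖(p : L)‖ = (p : ℝ)⁻¹) (n : ℕ) :
    ‖lbinom (((p : L) - 1)⁻¹) n‖ ≤ 1 := by
  haveI := aux_charZero hp3 hpL
  set x : L := ((p : L) - 1)⁻¹ with hx
  have hxn : ‖x‖ = 1 := by rw [hx, norm_inv, aux_norm_pm1 hp3 hpL, inv_one]
  have hnf : ((n.factorial : ℕ) : L) ≠ 0 := Nat.cast_ne_zero.2 (Nat.factorial_ne_zero n)
  have hnfpos : (0 : ℝ) < ‖((n.factorial : ℕ) : L)‖ := norm_pos_iff.2 hnf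
  have hinv1 : (p : ℝ)⁻¹ < 1 := by
    rw [inv_lt_one₀ (aux_p_pos hp3)]; exact aux_one_lt_p hp3
  obtain ⟨m, hm⟩ := exists_pow_lt_of_lt_one hnfpos hinv1
  set N : ℤ := -(∑ j ∈ Finset.range m, (p : ℤ) ^ j) with hN
  have hkey1 : ((p : L) - 1) * (x - N) = (p : L) ^ m := by
    have h1 : ((p : L) - 1) * x = 1 := mul_inv_cancel₀ (aux_pm1_ne hp3 hpL)
    have h2 : ((p : ℤ) - 1) * N = 1 - (p : ℤ) ^ m := by
      rw [hN]
      have := geom_sum_mul ((p : ℤ)) m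
      linarith
    have h3 : ((p : L) - 1) * (N : L) = 1 - (p : L) ^ m := by
      have := congrArg (fun z : ℤ => (z : L)) h2
      push_cast at this
      convert this using 2 <;> push_cast <;> ring
    rw [mul_sub, h1, h3]
    ring
  have hkey2 : ‖x - (N : L)‖ = ((p : ℝ)⁻¹) ^ m := by
    have := congrArg (‖·‖) hkey1
    simp only [norm_mul, norm_pow, hpL, aux_norm_pm1 hp3 hpL, one_mul] at this
    exact this
  have hdiff : ‖lbinom x n - lbinom ((N : ℤ) : L) n‖ ≤ ((p : ℝ)⁻¹) ^ m / ‖((n.factorial : ℕ) : L)‖ := by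
    unfold lbinom
    rw [div_sub_div_same, norm_div]
    gcongr
    refine aux_prod_diff (by positivity) (fun i => ?_) (fun i => ?_) (fun i => ?_) n
    · refine le_trans (aux_norm_sub_le_max _ _) (max_le (le_of_eq hxn) ?_)
      exact IsUltrametricDist.norm_natCast_le_one L i
    · refine le_trans (aux_norm_sub_le_max _ _) (max_le ?_ ?_)
      · exact IsUltrametricDist.norm_intCast_le_one L N
      · exact IsUltrametricDist.norm_natCast_le_one L i
    · have : x - (i : ℕ) - (((N : ℤ) : L) - (i : ℕ)) = x - (N : L) := by ring
      rw [this, hkey2]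
  have hfinal : ‖lbinom x n‖ ≤ max ‖lbinom ((N : ℤ) : L) n‖ ‖lbinom x n - lbinom ((N : ℤ) : L) n‖ := by
    calc ‖lbinom x n‖ = ‖lbinom ((N : ℤ) : L) n + (lbinom x n - lbinom ((N : ℤ) : L) n)‖ := by
          rw [show lbinom ((N : ℤ) : L) n + (lbinom x n - lbinom ((N : ℤ) : L) n)
            = lbinom x n by ring]
      _ ≤ _ := IsUltrametricDist.norm_add_le_max _ _
  refine le_trans hfinal (max_le (aux_lbinom_int N n) (le_trans hdiff ?_))
  rw [div_le_one hnfpos]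
  exact le_of_lt hm

end Lbinom

section FEanalysis

set_option linter.unusedSectionVars false

variable {p : ℕ} {L : Type*} [NormedField L] [IsUltrametricDist L]

lemma aux_choose_norm (hp : p.Prime) (hpL : ‖(p : L)‖ = (p : ℝ)⁻¹) {i : ℕ}
    (h1 : i ≠ 0) (h2 : i < p) : ‖(p.choose i : L)‖ ≤ (p : ℝ)⁻¹ := by
  obtain ⟨c, hc⟩ := hp.dvd_choose_self h1 h2
  rw [hc, Nat.cast_mul, norm_mul, hpL]
  calc (p : ℝ)⁻¹ * ‖(c : L)‖ ≤ (p : ℝ)⁻¹ * 1 :=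
        mul_le_mul_of_nonneg_left (IsUltrametricDist.norm_natCast_le_one L c) (by positivity)
    _ = (p : ℝ)⁻¹ := mul_one _

lemma aux_yF_norm (hp : p.Prime) (hpL : ‖(p : L)‖ = (p : ℝ)⁻¹) (j : ℤ) :
    ‖(yF p : ℤ → L) j‖ ≤ 1 := by
  have hppos : (0:ℝ) < (p:ℝ)⁻¹ := by
    have := hp.two_le
    have : (0:ℝ) < (p:ℝ) := by exact_mod_cast hp.pos
    positivity
  refine IsUltrametricDist.norm_sum_le_of_forall_le_of_nonneg zero_le_one fun i hi => ?_
  rw [Finset.mem_Ico] at hi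
  split_ifs
  · rw [norm_div, hpL, div_le_one hppos]
    exact aux_choose_norm hp hpL (by omega) hi.2
  · simp

lemma aux_yF_supp {j : ℤ} (h : (yF p : ℤ → L) j ≠ 0) :
    ∃ s : ℕ, 1 ≤ s ∧ s ≤ p - 1 ∧ j = -(((p : ℤ) - 1) * s) := by
  have hex : ∃ i ∈ Finset.Ico 1 p, j = ((p : ℤ) - 1) * ((i : ℤ) - p) := by
    by_contra hc
    push_neg at hc
    exact h (Finset.sum_eq_zero fun i hi => if_neg (hc i hi))
  obtain ⟨i, hi, hj⟩ := hex
  rw [Finset.mem_Ico] at hi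
  refine ⟨p - i, by omega, by omega, ?_⟩
  rw [hj]
  have hcast : ((p - i : ℕ) : ℤ) = (p : ℤ) - i := by omega
  rw [hcast]
  ring

lemma aux_ypow (hp : p.Prime) (hp3 : 3 ≤ p) (hpL : ‖(p : L)‖ = (p : ℝ)⁻¹) (r : ℕ) :
    (∀ j, ‖powE (yF p : ℤ → L) r j‖ ≤ 1) ∧
    (∀ j, powE (yF p : ℤ → L) r j ≠ 0 →
      ∃ s : ℕ, j = -(((p : ℤ) - 1) * s) ∧ r ≤ s ∧ s ≤ (p - 1) * r) := by
  induction r with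
  | zero =>
      constructor
      · intro j
        unfold powE oneE
        split <;> simp
      · intro j hj
        refine ⟨0, ?_, le_rfl, by simp⟩
        have : j = 0 := by
          by_contra hne
          exact hj (if_neg hne)
        simp [this]
  | succ r ih =>
      constructor
      · intro j
        refine aux_norm_tsum_le zero_le_one fun k => ?_
        rw [norm_mul]
        calc ‖(yF p : ℤ → L) k‖ * ‖powE (yF p : ℤ → L) r (j - k)‖ ≤ 1 * 1 :=
              mul_le_mul (aux_yF_norm hp hpL k) (ih.1 _) (norm_nonneg _) zero_le_one
          _ = 1 := one_mul 1
      · intro j hj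
        obtain ⟨k, hyk, hPk⟩ := aux_mulE_ne hj
        obtain ⟨s0, hs01, hs02, hk⟩ := aux_yF_supp hyk
        obtain ⟨s1, hjk, hrs1, hs1r⟩ := ih.2 _ hPk
        refine ⟨s0 + s1, ?_, by omega, ?_⟩
        · push_cast
          push_cast at hk hjk
          linarith
        · have hexp : (p - 1) * (r + 1) = (p - 1) * r + (p - 1) := by ring
          omega

lemma aux_nice_FE [CompleteSpace L] (hp : p.Prime) (hp3 : 3 ≤ p)
    (hpL : ‖(p : L)‖ = (p : ℝ)⁻¹) : IsNice p p (FE p : ℤ → L) := by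
  refine ⟨?_, ?_, ?_⟩
  · intro j hj
    obtain ⟨r, hr⟩ := aux_tsum_ne hj
    have hyp : powE (yF p : ℤ → L) r (j - p) ≠ 0 := by
      intro h0
      exact hr (by rw [h0, mul_zero])
    obtain ⟨s, hs, _, _⟩ := (aux_ypow hp hp3 hpL r).2 _ hyp
    exact ⟨s, by linarith⟩
  · show (∑' r : ℕ, lbinom (((p : L) - 1)⁻¹) r * (p : L) ^ r * powE (yF p) r ((p : ℤ) - p)) = 1
    rw [tsum_eq_single 0 ?_]
    · have h0 : ((p : ℤ) - p) = 0 := by ring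
      rw [h0]
      unfold lbinom powE oneE
      simp
    · intro r hr
      have hyp : powE (yF p : ℤ → L) r ((p : ℤ) - p) = 0 := by
        by_contra h0
        obtain ⟨s, hs, hrs, _⟩ := (aux_ypow hp hp3 hpL r).2 _ h0
        have hz : ((p : ℤ) - 1) * s = 0 := by omega
        have hs0 : (s : ℤ) = 0 := by
          rcases mul_eq_zero.1 hz with h | h
          · omega
          · exact h
        have : s = 0 := by exact_mod_cast hs0
        omega
      rw [hyp, mul_zero]
  · intro s
    refine aux_norm_tsum_le (le_of_lt (aux_wt_pos hp3 _)) fun r => ?_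
    by_cases hyp : powE (yF p : ℤ → L) r ((p : ℤ) - ((p : ℤ) - 1) * s - p) = 0
    · rw [hyp, mul_zero, norm_zero]
      exact le_of_lt (aux_wt_pos hp3 _)
    obtain ⟨s', hs', hrs', hs'r⟩ := (aux_ypow hp hp3 hpL r).2 _ hyp
    have hss : s' = s := by
      have h1 : ((p : ℤ) - 1) * s = ((p : ℤ) - 1) * s' := by linarith
      have h2 := mul_left_cancel₀ (show ((p : ℤ) - 1) ≠ 0 by omega) h1
      exact_mod_cast h2.symm
    subst hss
    have hCL : CL p s' ≤ r := (CL_le_iff hp3).2 hs'r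
    rw [norm_mul, norm_mul]
    calc ‖lbinom (((p : L) - 1)⁻¹) r‖ * ‖(p : L) ^ r‖ * ‖powE (yF p : ℤ → L) r _‖
        ≤ 1 * ((p : ℝ) ^ (-(r : ℤ))) * 1 := by
          refine mul_le_mul (mul_le_mul (aux_lbinom_norm hp3 hpL r) ?_ (norm_nonneg _)
            zero_le_one) ((aux_ypow hp hp3 hpL r).1 _) (norm_nonneg _) ?_
          · rw [norm_pow, hpL, inv_pow, ← zpow_natCast (p : ℝ), ← zpow_neg]
          · have := aux_wt_pos hp3 (-(r : ℤ))
            positivity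
      _ = (p : ℝ) ^ (-(r : ℤ)) := by ring
      _ ≤ (p : ℝ) ^ (-(CL p s' : ℤ)) := aux_wt_mono hp3 (by exact_mod_cast hCL)

end FEanalysis

section FinvAnalysis

set_option linter.unusedSectionVars false

variable {p : ℕ} {L : Type*} [NormedField L] [IsUltrametricDist L] [CompleteSpace L]

variable {Finv : ℤ → L} {C0 : ℝ}

lemma aux_finv_eq (hp : p.Prime) (hp3 : 3 ≤ p) (hpL : ‖(p : L)‖ = (p : ℝ)⁻¹)
    (hFinv : mulE (FE p) Finv = oneE) (hC0 : 0 ≤ C0) (hbound : ∀ j, ‖Finv j‖ ≤ C0) (m : ℤ) :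
    Finv (m - p) = (if m = 0 then 1 else 0)
      - ∑' k : ℤ, (if k = (p : ℤ) then 0 else (FE p : ℤ → L) k * Finv (m - k)) := by
  have hnice := aux_nice_FE (L := L) hp hp3 hpL
  have hsum : Summable (fun k : ℤ => (FE p : ℤ → L) k * Finv (m - k)) :=
    aux_summable_nice hp3 hC0 hnice.1 hnice.2.2 hbound m
  have heq : (∑' k : ℤ, (FE p : ℤ → L) k * Finv (m - k)) = (if m = 0 then 1 else 0) := by
    have := congrFun hFinv m
    simpa [mulE, oneE] using this
  have hsplit := Summable.tsum_eq_add_tsum_ite hsum (p : ℤ)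
  rw [heq] at hsplit
  rw [hnice.2.1, one_mul] at hsplit
  exact eq_sub_of_add_eq hsplit.symm

lemma aux_finv_master (hp : p.Prime) (hp3 : 3 ≤ p) (hpL : ‖(p : L)‖ = (p : ℝ)⁻¹)
    (hFinv : mulE (FE p) Finv = oneE) (hC0 : 0 ≤ C0) (hbound : ∀ j, ‖Finv j‖ ≤ C0)
    (m : ℤ) {B : ℝ} (hB : 0 ≤ B)
    (hterm : ∀ s : ℕ, 1 ≤ s →
      (p : ℝ) ^ (-(CL p s : ℤ)) * ‖Finv (m - p + ((p : ℤ) - 1) * s)‖ ≤ B) :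
    ‖Finv (m - p) - (if m = (0 : ℤ) then (1 : L) else 0)‖ ≤ B := by
  have hnice := aux_nice_FE (L := L) hp hp3 hpL
  rw [aux_finv_eq hp hp3 hpL hFinv hC0 hbound m]
  rw [show (if m = 0 then (1:L) else 0)
      - (∑' k : ℤ, (if k = (p : ℤ) then 0 else (FE p : ℤ → L) k * Finv (m - k)))
      - (if m = (0:ℤ) then (1:L) else 0)
      = -(∑' k : ℤ, (if k = (p : ℤ) then 0 else (FE p : ℤ → L) k * Finv (m - k))) by ring]
  rw [norm_neg]
  refine aux_norm_tsum_le hB fun k => ?_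
  by_cases hk : k = (p : ℤ)
  · simp [hk, hB]
  rw [if_neg hk]
  by_cases hFE : (FE p : ℤ → L) k = 0
  · simp [hFE, hB]
  obtain ⟨s, rfl⟩ := hnice.1 _ hFE
  have hs1 : 1 ≤ s := by
    rcases Nat.eq_zero_or_pos s with rfl | h
    · simp at hk
    · exact h
  have hidx : m - ((p : ℤ) - ((p : ℤ) - 1) * s) = m - p + ((p : ℤ) - 1) * s := by ring
  rw [norm_mul, hidx]
  calc ‖(FE p : ℤ → L) ((p : ℤ) - ((p : ℤ) - 1) * s)‖ * ‖Finv (m - p + ((p : ℤ) - 1) * s)‖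
      ≤ (p : ℝ) ^ (-(CL p s : ℤ)) * ‖Finv (m - p + ((p : ℤ) - 1) * s)‖ :=
        mul_le_mul_of_nonneg_right (hnice.2.2 s) (norm_nonneg _)
    _ ≤ B := hterm s hs1

lemma aux_finv_vanish (hp : p.Prime) (hp3 : 3 ≤ p) (hpL : ‖(p : L)‖ = (p : ℝ)⁻¹)
    (hFinv : mulE (FE p) Finv = oneE) (hC0 : 0 ≤ C0) (hbound : ∀ j, ‖Finv j‖ ≤ C0) :
    ∀ j : ℤ, (∀ s : ℕ, j ≠ -(p : ℤ) - ((p : ℤ) - 1) * s) → Finv j = 0 := by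
  have hstep : ∀ k : ℕ, ∀ j : ℤ, (∀ s : ℕ, j ≠ -(p : ℤ) - ((p : ℤ) - 1) * s) →
      ‖Finv j‖ ≤ C0 * ((p : ℝ)⁻¹) ^ k := by
    intro k
    induction k with
    | zero => intro j _; simpa using hbound j
    | succ k IH =>
        intro j hj
        have hm0 : j + p ≠ 0 := by
          intro h0
          exact hj 0 (by omega)
        have key := aux_finv_master hp hp3 hpL hFinv hC0 hbound (j + p)
          (B := (p : ℝ)⁻¹ * (C0 * ((p : ℝ)⁻¹) ^ k)) (by positivity) ?_
        · rw [if_neg hm0] at key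
          have hidx : j + p - p = j := by ring
          rw [hidx, sub_zero] at key
          calc ‖Finv j‖ ≤ (p : ℝ)⁻¹ * (C0 * ((p : ℝ)⁻¹) ^ k) := key
            _ = C0 * ((p : ℝ)⁻¹) ^ (k + 1) := by ring
        · intro s hs
          have hcond : ∀ s' : ℕ, j + p - p + ((p : ℤ) - 1) * s ≠ -(p : ℤ) - ((p : ℤ) - 1) * s' := by
            intro s' hc
            have h1 : j = -(p : ℤ) - ((p : ℤ) - 1) * (s + s') := by push_cast; linarith
            exact hj (s + s') h1
          have hIH := IH _ hcond
          have hwt : (p : ℝ) ^ (-(CL p s : ℤ)) ≤ (p : ℝ)⁻¹ := by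
            have h1 : (1 : ℤ) ≤ (CL p s : ℤ) := by exact_mod_cast one_le_CL hp3 hs
            calc (p : ℝ) ^ (-(CL p s : ℤ)) ≤ (p : ℝ) ^ (-(1 : ℤ)) := aux_wt_mono hp3 h1
              _ = (p : ℝ)⁻¹ := by simp
          exact mul_le_mul hwt hIH (norm_nonneg _) (by positivity)
  intro j hj
  rw [← norm_le_zero_iff]
  refine aux_le_limit (C := C0) le_rfl (by positivity)
    (show (p:ℝ)⁻¹ < 1 by rw [inv_lt_one₀ (aux_p_pos hp3)]; exact aux_one_lt_p hp3) fun k => ?_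
  exact le_trans (hstep k j hj) (le_max_right _ _)

lemma aux_finv_top (hp : p.Prime) (hp3 : 3 ≤ p) (hpL : ‖(p : L)‖ = (p : ℝ)⁻¹)
    (hFinv : mulE (FE p) Finv = oneE) (hC0 : 0 ≤ C0) (hbound : ∀ j, ‖Finv j‖ ≤ C0) :
    Finv (-(p : ℤ)) = 1 := by
  have key := aux_finv_master hp hp3 hpL hFinv hC0 hbound 0 (B := 0) le_rfl ?_
  · rw [if_pos rfl] at key
    have hidx : (0 : ℤ) - p = -(p : ℤ) := by ring
    rw [hidx] at key
    have h5 := norm_le_zero_iff.1 key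
    exact sub_eq_zero.mp h5
  · intro s hs
    have hvan : Finv ((0 : ℤ) - p + ((p : ℤ) - 1) * s) = 0 := by
      refine aux_finv_vanish hp hp3 hpL hFinv hC0 hbound _ fun s' hc => ?_
      have h1 : ((p : ℤ) - 1) * s + ((p : ℤ) - 1) * s' = 0 := by linarith
      have h2 : (0 : ℤ) < ((p : ℤ) - 1) * s :=
        mul_pos (by omega) (by exact_mod_cast hs)
      have h3 : (0 : ℤ) ≤ ((p : ℤ) - 1) * s' := mul_nonneg (by omega) (Int.natCast_nonneg _)
      omega
    rw [hvan, norm_zero, mul_zero]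

lemma aux_nice_Finv (hp : p.Prime) (hp3 : 3 ≤ p) (hpL : ‖(p : L)‖ = (p : ℝ)⁻¹)
    (hFinv : mulE (FE p) Finv = oneE) (hC0 : 0 ≤ C0) (hbound : ∀ j, ‖Finv j‖ ≤ C0) :
    IsNice p (-(p : ℤ)) Finv := by
  refine ⟨?_, aux_finv_top hp hp3 hpL hFinv hC0 hbound, ?_⟩
  · intro j hj
    by_contra hc
    push_neg at hc
    refine hj (aux_finv_vanish hp hp3 hpL hFinv hC0 hbound j fun s hs => ?_)
    exact hc s (by omega)
  · intro s
    induction s using Nat.strong_induction_on with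
    | _ s IH =>
      rcases Nat.eq_zero_or_pos s with rfl | hspos
      · simp only [Nat.cast_zero, mul_zero, sub_zero]
        rw [aux_finv_top hp hp3 hpL hFinv hC0 hbound, norm_one, CL_zero hp3]
        simp
      · have hm0 : -(((p : ℤ) - 1) * s) ≠ 0 := by
          have h2 : (0 : ℤ) < ((p : ℤ) - 1) * s :=
            mul_pos (by omega) (by exact_mod_cast hspos)
          omega
        have key := aux_finv_master hp hp3 hpL hFinv hC0 hbound (-(((p : ℤ) - 1) * s))
          (B := (p : ℝ) ^ (-(CL p s : ℤ))) (le_of_lt (aux_wt_pos hp3 _)) ?_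
        · rw [if_neg hm0, sub_zero] at key
          have hidx : -(((p : ℤ) - 1) * s) - p = -(p : ℤ) - ((p : ℤ) - 1) * s := by ring
          rw [hidx] at key
          exact key
        · intro σ hσ
          by_cases hle : σ ≤ s
          · have hidx2 : -(((p : ℤ) - 1) * s) - p + ((p : ℤ) - 1) * σ
                = -(p : ℤ) - ((p : ℤ) - 1) * ((s - σ : ℕ) : ℤ) := by
              have : ((s - σ : ℕ) : ℤ) = (s : ℤ) - σ := by omega
              rw [this]
              ring
            rw [hidx2]
            have hIH := IH (s - σ) (by omega)
            calc (p : ℝ) ^ (-(CL p σ : ℤ)) * ‖Finv (-(p : ℤ) - ((p : ℤ) - 1) * ((s - σ : ℕ) : ℤ))‖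
                ≤ (p : ℝ) ^ (-(CL p σ : ℤ)) * (p : ℝ) ^ (-(CL p (s - σ) : ℤ)) :=
                  mul_le_mul_of_nonneg_left hIH (le_of_lt (aux_wt_pos hp3 _))
              _ = (p : ℝ) ^ (-((CL p σ : ℤ) + (CL p (s - σ) : ℤ))) := aux_wt_mul hp3 _ _
              _ ≤ (p : ℝ) ^ (-(CL p s : ℤ)) := by
                  refine aux_wt_mono hp3 ?_
                  have h1 : CL p s ≤ CL p σ + CL p (s - σ) := by
                    have h2 := CL_add_le hp3 σ (s - σ)
                    rw [show σ + (s - σ) = s by omega] at h2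
                    exact h2
                  exact_mod_cast h1
          · have hvan : Finv (-(((p : ℤ) - 1) * s) - p + ((p : ℤ) - 1) * σ) = 0 := by
              refine aux_finv_vanish hp hp3 hpL hFinv hC0 hbound _ fun s' hc => ?_
              have h1 : ((p : ℤ) - 1) * σ = ((p : ℤ) - 1) * s - ((p : ℤ) - 1) * s' := by
                linarith
              have h2 : ((p : ℤ) - 1) * σ ≤ ((p : ℤ) - 1) * s := by
                have h3 : (0 : ℤ) ≤ ((p : ℤ) - 1) * s' :=
                  mul_nonneg (by omega) (Int.natCast_nonneg _)
                omega
              have h4 : (σ : ℤ) ≤ (s : ℤ) :=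
                le_of_mul_le_mul_left (by linarith) (show (0:ℤ) < (p : ℤ) - 1 by omega)
              omega
            rw [hvan, norm_zero, mul_zero]
            exact le_of_lt (aux_wt_pos hp3 _)

end FinvAnalysis

section TargArith

variable {p : ℕ}

/-- Ceiling division `⌈q/p⌉`. -/
def KQ (p : ℕ) (q : ℤ) : ℤ := (q + p - 1) / p

lemma KQ_le_iff (hp3 : 3 ≤ p) {q k : ℤ} : KQ p q ≤ k ↔ q ≤ (p : ℤ) * k := by
  have hp0 : (0 : ℤ) < (p : ℤ) := by exact_mod_cast (by omega : 0 < p)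
  have hchar : ∀ j : ℤ, j ≤ (q + p - 1) / p ↔ j * p ≤ q + p - 1 :=
    fun j => Int.le_ediv_iff_mul_le hp0
  constructor
  · intro h
    by_contra hc
    push_neg at hc
    have h1 : (k + 1) * (p : ℤ) ≤ q + p - 1 := by nlinarith
    have h2 := (hchar (k + 1)).2 h1
    unfold KQ at h
    omega
  · intro h
    unfold KQ
    by_contra hc
    push_neg at hc
    have h2 := (hchar (k + 1)).1 (by omega)
    nlinarith

lemma KQ_self (hp3 : 3 ≤ p) (q : ℤ) : q ≤ (p : ℤ) * KQ p q := (KQ_le_iff hp3).1 le_rfl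

lemma KQ_lt (hp3 : 3 ≤ p) (q : ℤ) : (p : ℤ) * (KQ p q - 1) < q := by
  by_contra hc
  push_neg at hc
  have := (KQ_le_iff hp3).2 hc
  omega

lemma KQ_mono (hp3 : 3 ≤ p) {q q' : ℤ} (h : q ≤ q') : KQ p q ≤ KQ p q' :=
  (KQ_le_iff hp3).2 (le_trans h (KQ_self hp3 q'))

lemma KQ_exact (hp3 : 3 ≤ p) {q : ℤ} (h : (p : ℤ) ∣ q) : (p : ℤ) * KQ p q = q := by
  obtain ⟨d, rfl⟩ := h
  have h1 : KQ p ((p : ℤ) * d) ≤ d := (KQ_le_iff hp3).2 le_rfl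
  have h2 := KQ_self hp3 ((p : ℤ) * d)
  have hp0 : (0 : ℤ) < (p : ℤ) := by exact_mod_cast (by omega : 0 < p)
  have h3 : d ≤ KQ p ((p : ℤ) * d) := le_of_mul_le_mul_left h2 hp0
  have h4 : KQ p ((p : ℤ) * d) = d := by omega
  rw [h4]

/-- The exponent function for the target bounds. -/
def gg (p : ℕ) (q : ℤ) : ℤ :=
  if (p : ℤ) ∣ q then max 0 (-(KQ p q)) else 1 + max 0 (-(KQ p q))

lemma gg_nonneg (q : ℤ) : 0 ≤ gg p q := by
  unfold gg
  split_ifs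
  · exact le_max_left _ _
  · have := le_max_left (0 : ℤ) (-(KQ p q))
    omega

lemma gg_le (q : ℤ) : gg p q ≤ 1 + max 0 (-(KQ p q)) := by
  unfold gg
  split_ifs
  · omega
  · exact le_rfl

lemma gg_ge (q : ℤ) : max 0 (-(KQ p q)) ≤ gg p q := by
  unfold gg
  split_ifs
  · exact le_rfl
  · omega

lemma aux_max_helper {A B C : ℤ} (hAB : A ≤ B) (hC : 0 ≤ C) (h : B - A ≤ C) :
    max 0 (-A) ≤ max 0 (-B) + C := by
  refine max_le ?_ ?_
  · have := le_max_left (0 : ℤ) (-B)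
    omega
  · have := le_max_right (0 : ℤ) (-B)
    omega

lemma aux_claimC (hp3 : 3 ≤ p) (q : ℤ) (s : ℕ) (hs : 1 ≤ s) :
    gg p q ≤ gg p (q + s) + (CL p s : ℤ) := by
  have hs0 : (1 : ℤ) ≤ (s : ℤ) := by exact_mod_cast hs
  have hAB : KQ p q ≤ KQ p (q + s) := KQ_mono hp3 (by omega)
  have hCL1 : (1 : ℤ) ≤ (CL p s : ℤ) := by exact_mod_cast one_le_CL hp3 hs
  have hcast : ((p - 1 : ℕ) : ℤ) = (p : ℤ) - 1 := by omega
  have hds : (s : ℤ) ≤ ((p : ℤ) - 1) * (CL p s : ℤ) := by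
    have h1 := le_CL_self hp3 s
    have h2 : ((s : ℤ)) ≤ (((p - 1) * CL p s : ℕ) : ℤ) := by exact_mod_cast h1
    rw [Nat.cast_mul, hcast] at h2
    exact h2
  have hqA : q ≤ (p : ℤ) * KQ p q := KQ_self hp3 q
  have hBA : KQ p (q + s) - KQ p q ≤ (CL p s : ℤ) := by
    have h1 : KQ p (q + s) ≤ KQ p q + CL p s := by
      refine (KQ_le_iff hp3).2 ?_
      have hmul : (p : ℤ) * (KQ p q + (CL p s : ℤ))
          = (p : ℤ) * KQ p q + ((p : ℤ) - 1) * (CL p s : ℤ) + (CL p s : ℤ) := by ring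
      rw [hmul]
      omega
    omega
  by_cases hdq2 : (p : ℤ) ∣ (q + s)
  · by_cases hdq : (p : ℤ) ∣ q
    · rw [gg, if_pos hdq, gg, if_pos hdq2]
      exact aux_max_helper hAB (by omega) hBA
    · -- stronger: KQ p (q+s) - KQ p q + 1 ≤ CL p s
      have hexact : (p : ℤ) * KQ p (q + s) = q + s := KQ_exact hp3 hdq2
      have hlt : (p : ℤ) * (KQ p q - 1) < q := KQ_lt hp3 q
      have hstrong : KQ p (q + s) - KQ p q + 1 ≤ (CL p s : ℤ) := by
        rcases eq_or_lt_of_le hAB with heq | hlt2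
        · omega
        · have h5 : ((p : ℤ) - 1) * (KQ p (q + s) - KQ p q) < (s : ℤ) := by
            have h6 : (s : ℤ) = (p : ℤ) * KQ p (q + s) - q := by omega
            have h8 : (p : ℤ) * KQ p (q + s) - (p : ℤ) * KQ p q
                = ((p : ℤ) - 1) * (KQ p (q + s) - KQ p q) + (KQ p (q + s) - KQ p q) := by
              ring
            omega
          have h9 : (KQ p (q + s) - KQ p q).toNat < CL p s := by
            rw [lt_CL_iff hp3]
            have h10 : (((p - 1) * (KQ p (q + s) - KQ p q).toNat : ℕ) : ℤ) < (s : ℤ) := by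
              rw [Nat.cast_mul, hcast, Int.toNat_of_nonneg (by omega)]
              exact h5
            exact_mod_cast h10
          have h11 : ((KQ p (q + s) - KQ p q).toNat : ℤ) = KQ p (q + s) - KQ p q :=
            Int.toNat_of_nonneg (by omega)
          omega
      calc gg p q = 1 + max 0 (-(KQ p q)) := by rw [gg, if_neg hdq]
        _ ≤ 1 + (max 0 (-(KQ p (q + s))) + ((CL p s : ℤ) - 1)) := by
              have := aux_max_helper hAB (by omega : (0:ℤ) ≤ (CL p s : ℤ) - 1) (by omega)
              linarith
        _ = max 0 (-(KQ p (q + s))) + CL p s := by ring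
        _ = gg p (q + (s : ℤ)) + CL p s := by rw [gg, if_pos hdq2]
  · have hgg2 : gg p (q + (s : ℤ)) = 1 + max 0 (-(KQ p (q + s))) := by
      rw [gg, if_neg hdq2]
    have h1 : gg p q ≤ 1 + max 0 (-(KQ p q)) := gg_le q
    have h2 := aux_max_helper hAB (by omega : (0:ℤ) ≤ (CL p s : ℤ)) hBA
    linarith

/-- The target bound for the coefficient of the minimal polynomial at `m = p*n + i`. -/
noncomputable def targ (p : ℕ) (m : ℤ) : ℝ :=
  if ((p : ℤ) - 1) ∣ m then (p : ℝ) ^ (-(gg p (m / ((p : ℤ) - 1)))) else 0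

lemma targ_nonneg (hp3 : 3 ≤ p) (m : ℤ) : 0 ≤ targ p m := by
  unfold targ
  split_ifs
  · exact le_of_lt (aux_wt_pos hp3 _)
  · exact le_rfl

lemma targ_le_one (hp3 : 3 ≤ p) (m : ℤ) : targ p m ≤ 1 := by
  unfold targ
  split_ifs
  · exact aux_wt_le_one hp3 _ (gg_nonneg _)
  · exact zero_le_one

lemma targ_zero (hp3 : 3 ≤ p) : targ p 0 = 1 := by
  unfold targ
  rw [if_pos (dvd_zero _), Int.zero_ediv]
  have h1 : (p : ℤ) * KQ p 0 = 0 := KQ_exact hp3 (dvd_zero _)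
  have h2 : KQ p 0 = 0 := by
    have hp0 : (p : ℤ) ≠ 0 := by omega
    exact (mul_eq_zero.1 h1).resolve_left hp0
  rw [gg, if_pos (dvd_zero _), h2]
  norm_num

lemma aux_targ_key (hp3 : 3 ≤ p) (m : ℤ) (s : ℕ) (hs : 1 ≤ s) :
    (p : ℝ) ^ (-(CL p s : ℤ)) * targ p (m + ((p : ℤ) - 1) * s) ≤ targ p m := by
  by_cases hd : ((p : ℤ) - 1) ∣ m
  · have hd2 : ((p : ℤ) - 1) ∣ (m + ((p : ℤ) - 1) * s) := dvd_add hd (dvd_mul_right _ _)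
    unfold targ
    rw [if_pos hd, if_pos hd2]
    obtain ⟨d, rfl⟩ := hd
    have hne : ((p : ℤ) - 1) ≠ 0 := by omega
    have hq1 : ((p : ℤ) - 1) * d / ((p : ℤ) - 1) = d := Int.mul_ediv_cancel_left d hne
    have hq2 : (((p : ℤ) - 1) * d + ((p : ℤ) - 1) * s) / ((p : ℤ) - 1) = d + s := by
      rw [← mul_add]
      exact Int.mul_ediv_cancel_left _ hne
    rw [hq1, hq2, aux_wt_mul hp3]
    exact aux_wt_mono hp3 (by linarith [aux_claimC hp3 d s hs])
  · have hd2 : ¬ ((p : ℤ) - 1) ∣ (m + ((p : ℤ) - 1) * s) := by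
      intro hc
      exact hd (by simpa using dvd_sub hc (dvd_mul_right ((p : ℤ) - 1) (s : ℤ)))
    unfold targ
    rw [if_neg hd, if_neg hd2, mul_zero]

end TargArith

section MainBound

set_option linter.unusedSectionVars false

variable {p : ℕ} {L : Type*} [NormedField L] [IsUltrametricDist L] [CompleteSpace L]

lemma aux_summable_S (hp3 : 3 ≤ p) {g : ℤ → L} {Φ : ℤ → ℤ → L} {C : ℝ} (hC : 0 ≤ C)
    (hg : ∀ n, ‖g n‖ ≤ C) (hnice : ∀ n : ℤ, IsNice p ((p : ℤ) * n) (Φ n)) (j : ℤ) :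
    Summable (fun n => g n * Φ n j) := by
  apply aux_summable
  intro ε hε
  obtain ⟨K, hK⟩ := exists_pow_lt_of_lt_one (show (0:ℝ) < ε / (C + 1) by positivity)
    (show (p:ℝ)⁻¹ < 1 by rw [inv_lt_one₀ (aux_p_pos hp3)]; exact aux_one_lt_p hp3)
  have hcast : ((p - 1 : ℕ) : ℤ) = (p : ℤ) - 1 := by omega
  refine ⟨Finset.Icc (min j 1) (max 0 (j + ((p : ℤ) - 1) * (((p : ℤ) - 1) * K))), fun n hn => ?_⟩
  by_cases hZ : Φ n j = 0
  · simp [hZ]; linarith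
  obtain ⟨s, hsrep⟩ := (hnice n).1 _ hZ
  have hcs : (0:ℤ) ≤ ((p : ℤ) - 1) * s := mul_nonneg (by omega) (Int.natCast_nonneg _)
  have hlow : min j 1 ≤ n := by
    rcases le_or_gt n 0 with h0 | h0
    · have h1 : (p : ℤ) * n ≤ n := by nlinarith
      have h2 : j ≤ (p : ℤ) * n := by omega
      exact le_trans (min_le_left _ _) (by omega)
    · exact le_trans (min_le_right _ _) h0
  have hhi : max 0 (j + ((p : ℤ) - 1) * (((p : ℤ) - 1) * K)) < n := by
    by_contra hcon
    push_neg at hcon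
    exact hn (Finset.mem_Icc.2 ⟨hlow, hcon⟩)
  have hn1 : (1:ℤ) ≤ n := by
    have := le_max_left (0:ℤ) (j + ((p : ℤ) - 1) * (((p : ℤ) - 1) * K))
    omega
  have hpn : j + ((p : ℤ) - 1) * (((p : ℤ) - 1) * K) < (p : ℤ) * n := by
    have h1 : n ≤ (p : ℤ) * n := by nlinarith
    have h2 := le_max_right (0:ℤ) (j + ((p : ℤ) - 1) * (((p : ℤ) - 1) * K))
    omega
  have hsK : ((p : ℤ) - 1) * K < (s : ℤ) := by
    have h2 : ((p : ℤ) - 1) * (((p : ℤ) - 1) * K) < ((p : ℤ) - 1) * s := by omega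
    exact lt_of_mul_lt_mul_left h2 (by omega)
  have hKCL : K < CL p s := by
    rw [lt_CL_iff hp3]
    have h3 : (((p - 1) * K : ℕ) : ℤ) < (s : ℤ) := by
      rw [Nat.cast_mul, hcast]
      exact hsK
    exact_mod_cast h3
  have hbΦ : ‖Φ n j‖ ≤ (p : ℝ) ^ (-(CL p s : ℤ)) := by
    rw [hsrep]
    exact (hnice n).2.2 s
  calc ‖g n * Φ n j‖ ≤ C * (p : ℝ) ^ (-(CL p s : ℤ)) := by
        rw [norm_mul]
        exact mul_le_mul (hg n) hbΦ (norm_nonneg _) hC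
    _ ≤ C * (p : ℝ) ^ (-(K : ℤ)) :=
        mul_le_mul_of_nonneg_left (aux_wt_mono hp3 (by exact_mod_cast le_of_lt hKCL)) hC
    _ = C * ((p:ℝ)⁻¹) ^ K := by rw [zpow_neg, zpow_natCast, inv_pow]
    _ ≤ (C + 1) * (ε / (C + 1)) :=
        mul_le_mul (by linarith) (le_of_lt hK) (by positivity) (by linarith)
    _ = ε := by field_simp

lemma aux_diag_unique (hp3 : 3 ≤ p) {i i' : ℕ} (hi : i ∈ Finset.Icc 1 p)
    (hi' : i' ∈ Finset.Icc 1 p) {n n' : ℤ} (h : (p : ℤ) * n + i = (p : ℤ) * n' + i') :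
    i = i' ∧ n = n' := by
  rw [Finset.mem_Icc] at hi hi'
  have hii : (1 : ℤ) ≤ (i : ℤ) ∧ (i : ℤ) ≤ p := by exact_mod_cast hi
  have hii' : (1 : ℤ) ≤ (i' : ℤ) ∧ (i' : ℤ) ≤ p := by exact_mod_cast hi'
  have hd2 : (i : ℤ) - i' = (p : ℤ) * (n' - n) := by
    have : (p : ℤ) * (n' - n) = (p : ℤ) * n' - (p : ℤ) * n := by ring
    omega
  have hiieq : (i : ℤ) = i' := by
    rcases lt_trichotomy (n' - n) 0 with hlt | heq0 | hgt
    · have h5 : (p : ℤ) * (n' - n) ≤ (p : ℤ) * (-1) := by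
        exact mul_le_mul_of_nonneg_left (by omega) (by omega)
      omega
    · rw [heq0, mul_zero] at hd2
      omega
    · have h5 : (p : ℤ) * 1 ≤ (p : ℤ) * (n' - n) := by
        exact mul_le_mul_of_nonneg_left (by omega) (by omega)
      omega
  constructor
  · exact_mod_cast hiieq
  · have h6 : (p : ℤ) * n = (p : ℤ) * n' := by omega
    exact mul_left_cancel₀ (by omega : (p : ℤ) ≠ 0) h6

lemma aux_mul_tpow (z : ℤ → L) (b j : ℤ) : mulE z (tpowE b) j = z (j - b) := by
  show (∑' k : ℤ, z k * (if j - k = b then (1:L) else 0)) = z (j - b)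
  have hfun : (fun k : ℤ => z k * (if j - k = b then (1:L) else 0))
      = fun k => if k = j - b then z (j - b) else 0 := by
    funext k
    by_cases hk : k = j - b
    · rw [if_pos hk, if_pos (by omega), hk, mul_one]
    · rw [if_neg hk, if_neg (by omega), mul_zero]
  rw [hfun]
  exact tsum_ite_eq _ _

lemma aux_pow_tpow (k : ℕ) : powE (tpowE (-1 : ℤ)) k = (tpowE (-(k : ℤ)) : ℤ → L) := by
  induction k with
  | zero =>
      funext n
      simp [powE, oneE, tpowE]
  | succ k ih =>
      show mulE (tpowE (-1 : ℤ)) (powE (tpowE (-1 : ℤ)) k) = _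
      rw [ih]
      funext j
      have hcomm : mulE (tpowE (-1 : ℤ) : ℤ → L) (tpowE (-(k : ℤ))) j
          = (tpowE (-1 : ℤ) : ℤ → L) (j - -(k : ℤ)) := aux_mul_tpow _ _ _
      rw [hcomm]
      show (if j - -(k : ℤ) = -1 then (1:L) else 0) = (if j = -((k+1 : ℕ) : ℤ) then (1:L) else 0)
      have hiff : (j - -(k : ℤ) = -1) ↔ (j = -((k+1 : ℕ) : ℤ)) := by
        push_cast
        omega
      rw [if_congr hiff rfl rfl]

lemma aux_eq_at {autL : L ≃+* L} {Finv : ℤ → L} {a : ℕ → ℤ → L}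
    (hmin : powE (tpowE (-1 : ℤ)) p
        + ∑ i ∈ Finset.Icc 1 p,
            mulE (nuF p autL Finv (a i)) (powE (tpowE (-1 : ℤ)) (p - i)) = 0) (m : ℤ) :
    (if m = 0 then (1:L) else 0)
      + ∑ i ∈ Finset.Icc 1 p, nuF p autL Finv (a i) (m - i) = 0 := by
  have h := congrFun hmin (m - p)
  rw [Pi.add_apply, Pi.zero_apply, Finset.sum_apply] at h
  rw [aux_pow_tpow p] at h
  have hterm : ∀ i ∈ Finset.Icc 1 p,
      mulE (nuF p autL Finv (a i)) (powE (tpowE (-1 : ℤ)) (p - i)) (m - p)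
        = nuF p autL Finv (a i) (m - i) := by
    intro i hi
    rw [Finset.mem_Icc] at hi
    rw [aux_pow_tpow, aux_mul_tpow]
    congr 1
    have : ((p - i : ℕ) : ℤ) = (p : ℤ) - i := by omega
    omega
  rw [Finset.sum_congr rfl hterm] at h
  have hif : (if m - (p : ℤ) = -(p : ℤ) then (1:L) else 0) = (if m = 0 then (1:L) else 0) :=
    if_congr (by omega) rfl rfl
  rw [show (tpowE (-(p:ℤ)) : ℤ → L) (m - p) = (if m - (p : ℤ) = -(p : ℤ) then (1:L) else 0)
    from rfl, hif] at h
  exact h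

lemma aux_main (hp : p.Prime) (hp3 : 3 ≤ p)
    (hpL : ‖(p : L)‖ = (p : ℝ)⁻¹) {autL : L ≃+* L} (hautL : ∀ x : L, ‖autL x‖ = ‖x‖)
    {Finv : ℤ → L} {a : ℕ → ℤ → L}
    {C : ℝ} (hC : 0 ≤ C) (hCa : ∀ i ∈ Finset.Icc 1 p, ∀ n : ℤ, ‖a i n‖ ≤ C)
    (hnice : ∀ n : ℤ, IsNice p ((p : ℤ) * n) (zpowE (FE p) Finv n))
    (heq : ∀ m : ℤ, (if m = 0 then (1:L) else 0)
      + ∑ i ∈ Finset.Icc 1 p, nuF p autL Finv (a i) (m - i) = 0) :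
    ∀ k : ℕ, ∀ i ∈ Finset.Icc 1 p, ∀ n : ℤ,
      ‖a i n‖ ≤ max (targ p ((p : ℤ) * n + i)) (C * ((p:ℝ)⁻¹) ^ k) := by
  intro k
  induction k with
  | zero =>
      intro i hi n
      refine le_max_of_le_right ?_
      simpa using hCa i hi n
  | succ k IH =>
      intro i hi n
      have hBnn : 0 ≤ max (targ p ((p : ℤ) * n + i)) (C * ((p:ℝ)⁻¹) ^ (k+1)) :=
        le_trans (targ_nonneg hp3 _) (le_max_left _ _)
      have PT : ∀ i' ∈ Finset.Icc 1 p, ∀ n' : ℤ, ¬(i' = i ∧ n' = n) →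
          ‖autL (a i' n') * zpowE (FE p) Finv n' (((p : ℤ) * n + i) - i')‖
            ≤ max (targ p ((p : ℤ) * n + i)) (C * ((p:ℝ)⁻¹) ^ (k+1)) := by
        intro i' hi' n' hne
        by_cases hZ : zpowE (FE p) Finv n' (((p : ℤ) * n + i) - i') = 0
        · rw [hZ, mul_zero, norm_zero]
          exact hBnn
        obtain ⟨s, hsrep⟩ := (hnice n').1 _ hZ
        have hs1 : 1 ≤ s := by
          rcases Nat.eq_zero_or_pos s with rfl | h
          · exfalso
            apply hne
            have heq2 : (p : ℤ) * n' + i' = (p : ℤ) * n + i := by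
              push_cast at hsrep
              omega
            have := aux_diag_unique hp3 hi' hi heq2
            exact ⟨this.1, this.2⟩
          · exact h
        have hm' : (p : ℤ) * n' + i' = ((p : ℤ) * n + i) + ((p : ℤ) - 1) * s := by omega
        have hwt1 : (p : ℝ) ^ (-(CL p s : ℤ)) ≤ (p:ℝ)⁻¹ := by
          have h1 : (1 : ℤ) ≤ (CL p s : ℤ) := by exact_mod_cast one_le_CL hp3 hs1
          calc (p : ℝ) ^ (-(CL p s : ℤ)) ≤ (p : ℝ) ^ (-(1:ℤ)) := aux_wt_mono hp3 h1
            _ = (p:ℝ)⁻¹ := by simp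
        calc ‖autL (a i' n') * zpowE (FE p) Finv n' (((p : ℤ) * n + i) - i')‖
            = ‖a i' n'‖ * ‖zpowE (FE p) Finv n' (((p : ℤ) * n + i) - i')‖ := by
              rw [norm_mul, hautL]
          _ ≤ max (targ p ((p : ℤ) * n' + i')) (C * ((p:ℝ)⁻¹) ^ k)
                * (p : ℝ) ^ (-(CL p s : ℤ)) := by
              refine mul_le_mul (IH i' hi' n') ?_ (norm_nonneg _)
                (le_trans (targ_nonneg hp3 _) (le_max_left _ _))
              rw [hsrep]
              exact (hnice n').2.2 s
          _ = max (targ p (((p : ℤ) * n + i) + ((p : ℤ) - 1) * s) * (p : ℝ) ^ (-(CL p s : ℤ)))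
                (C * ((p:ℝ)⁻¹) ^ k * (p : ℝ) ^ (-(CL p s : ℤ))) := by
              rw [hm', max_mul_of_nonneg _ _ (le_of_lt (aux_wt_pos hp3 _))]
          _ ≤ max (targ p ((p : ℤ) * n + i)) (C * ((p:ℝ)⁻¹) ^ (k+1)) := by
              refine max_le_max ?_ ?_
              · rw [mul_comm]
                exact aux_targ_key hp3 _ s hs1
              · calc C * ((p:ℝ)⁻¹) ^ k * (p : ℝ) ^ (-(CL p s : ℤ))
                    ≤ C * ((p:ℝ)⁻¹) ^ k * (p:ℝ)⁻¹ :=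
                      mul_le_mul_of_nonneg_left hwt1 (by positivity)
                  _ = C * ((p:ℝ)⁻¹) ^ (k+1) := by ring
      have hSum : ∀ i' ∈ Finset.Icc 1 p,
          Summable (fun n' : ℤ => autL (a i' n')
            * zpowE (FE p) Finv n' (((p : ℤ) * n + i) - i')) := by
        intro i' hi'
        exact aux_summable_S hp3 hC (fun n' => by rw [hautL]; exact hCa i' hi' n') hnice _
      have hsplit := Summable.tsum_eq_add_tsum_ite (hSum i hi) n
      have htop : zpowE (FE p) Finv n (((p : ℤ) * n + i) - i) = 1 := by
        rw [show ((p : ℤ) * n + i) - i = (p : ℤ) * n by ring]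
        exact (hnice n).2.1
      have heqm := heq ((p : ℤ) * n + i)
      rw [← Finset.add_sum_erase _ _ hi] at heqm
      rw [show nuF p autL Finv (a i) (((p : ℤ) * n + i) - i)
        = ∑' n', autL (a i n') * zpowE (FE p) Finv n' (((p : ℤ) * n + i) - i) from rfl] at heqm
      rw [hsplit, htop, mul_one] at heqm
      have hexpr : autL (a i n) = -(if ((p : ℤ) * n + i) = 0 then (1:L) else 0)
          - (∑' n', if n' = n then 0
              else autL (a i n') * zpowE (FE p) Finv n' (((p : ℤ) * n + i) - i))
          - ∑ i' ∈ (Finset.Icc 1 p).erase i, nuF p autL Finv (a i') (((p : ℤ) * n + i) - i') := by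
        linear_combination heqm
      calc ‖a i n‖ = ‖autL (a i n)‖ := (hautL _).symm
        _ ≤ max (targ p ((p : ℤ) * n + i)) (C * ((p:ℝ)⁻¹) ^ (k+1)) := by
            rw [hexpr, sub_eq_add_neg, sub_eq_add_neg]
            refine le_trans (IsUltrametricDist.norm_add_le_max _ _) (max_le
              (le_trans (IsUltrametricDist.norm_add_le_max _ _) (max_le ?_ ?_)) ?_)
            · rw [norm_neg]
              by_cases hm0 : ((p : ℤ) * n + i) = 0
              · rw [if_pos hm0, norm_one]
                refine le_max_of_le_left ?_
                rw [hm0, targ_zero hp3]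
              · rw [if_neg hm0, norm_zero]
                exact hBnn
            · rw [norm_neg]
              refine aux_norm_tsum_le hBnn fun n' => ?_
              by_cases hn' : n' = n
              · rw [if_pos hn', norm_zero]
                exact hBnn
              · rw [if_neg hn']
                exact PT i hi n' (fun hcon => hn' hcon.2)
            · rw [norm_neg]
              refine IsUltrametricDist.norm_sum_le_of_forall_le_of_nonneg hBnn fun i' hi' => ?_
              have hi'2 := Finset.mem_of_mem_erase hi'
              have hi'ne := Finset.ne_of_mem_erase hi'
              refine aux_norm_tsum_le hBnn fun n' => ?_
              exact PT i' hi'2 n' (fun hcon => hi'ne hcon.1)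

end MainBound

section Assembly

set_option linter.unusedSectionVars false

variable {p : ℕ} {L : Type*} [NormedField L] [IsUltrametricDist L] [CompleteSpace L]

lemma aux_nice_zpow (hp : p.Prime) (hp3 : 3 ≤ p) (hpL : ‖(p : L)‖ = (p : ℝ)⁻¹)
    {Finv : ℤ → L} {C0 : ℝ} (hFinv : mulE (FE p) Finv = oneE) (hC0 : 0 ≤ C0)
    (hbound : ∀ j, ‖Finv j‖ ≤ C0) (n : ℤ) :
    IsNice p ((p : ℤ) * n) (zpowE (FE p) Finv n) := by
  unfold zpowE
  split_ifs with h
  · have h2 := (aux_nice_FE (L := L) hp hp3 hpL).pow hp3 n.toNat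
    rw [show ((p : ℤ) * (n.toNat : ℤ)) = (p : ℤ) * n by rw [Int.toNat_of_nonneg h]] at h2
    exact h2
  · have h2 := (aux_nice_Finv hp hp3 hpL hFinv hC0 hbound).pow hp3 (-n).toNat
    rw [show (-(p : ℤ) * (((-n).toNat : ℕ) : ℤ)) = (p : ℤ) * n by
      rw [Int.toNat_of_nonneg (by omega : (0:ℤ) ≤ -n)]; ring] at h2
    exact h2

lemma aux_targ_div (hp3 : 3 ≤ p) (q : ℤ) :
    targ p (((p : ℤ) - 1) * q) = (p : ℝ) ^ (-(gg p q)) := by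
  unfold targ
  rw [if_pos ⟨q, rfl⟩, Int.mul_ediv_cancel_left _ (by omega : ((p : ℤ) - 1) ≠ 0)]

lemma aux_gg_mul (hp3 : 3 ≤ p) (κ : ℤ) : gg p ((p : ℤ) * κ) = max 0 (-κ) := by
  have h1 := KQ_exact hp3 (⟨κ, rfl⟩ : (p : ℤ) ∣ (p : ℤ) * κ)
  have hKQ : KQ p ((p : ℤ) * κ) = κ := mul_left_cancel₀ (by omega : (p : ℤ) ≠ 0) h1
  rw [gg, if_pos ⟨κ, rfl⟩, hKQ]

lemma aux_gg_nondiv (hp3 : 3 ≤ p) (κ : ℤ) {i : ℕ} (h1 : 1 ≤ i) (h2 : i < p) :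
    gg p ((p : ℤ) * κ - i) = 1 + max 0 (-κ) := by
  have hi1 : (1 : ℤ) ≤ (i : ℤ) := by exact_mod_cast h1
  have hi2 : (i : ℤ) < p := by exact_mod_cast h2
  have hnd : ¬ (p : ℤ) ∣ ((p : ℤ) * κ - i) := by
    rintro ⟨d, hd⟩
    have h3 : (i : ℤ) = (p : ℤ) * (κ - d) := by
      have : (p : ℤ) * (κ - d) = (p : ℤ) * κ - (p : ℤ) * d := by ring
      omega
    rcases lt_trichotomy (κ - d) 0 with hlt | heq0 | hgt
    · have h5 : (p : ℤ) * (κ - d) ≤ (p : ℤ) * (-1) :=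
        mul_le_mul_of_nonneg_left (by omega) (by omega)
      omega
    · rw [heq0, mul_zero] at h3
      omega
    · have h5 : (p : ℤ) * 1 ≤ (p : ℤ) * (κ - d) :=
        mul_le_mul_of_nonneg_left (by omega) (by omega)
      omega
  have hKQ : KQ p ((p : ℤ) * κ - i) = κ := by
    refine le_antisymm ((KQ_le_iff hp3).2 (by omega)) ?_
    by_contra hc
    push_neg at hc
    have h4 := (KQ_le_iff hp3).1 (show KQ p ((p : ℤ) * κ - i) ≤ κ - 1 by omega)
    have h5 : (p : ℤ) * (κ - 1) = (p : ℤ) * κ - p := by ring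
    omega
  rw [gg, if_neg hnd, hKQ]

end Assembly
/-- Writing the minimal polynomial of `t⁻¹` over `ν(ℰ)` as
`Q(X) = X^p + ν(a₁)X^{p-1} + ⋯ + ν(a_p)`, one has `a_p ∈ t⁻¹ℬ` and
`a_i ∈ p t^{-i} ℬ` for `1 ≤ i ≤ p-1`. Here `ν` is the type 2 Frobenius `t ↦ F`. -/
theorem statement_6 {p : ℕ} (hp : p.Prime) (hp3 : 3 ≤ p)
    {L : Type*} [NormedField L] [CompleteSpace L] [IsUltrametricDist L]
    (hpL : ‖(p : L)‖ = (p : ℝ)⁻¹)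
    (autL : L ≃+* L) (hautL : ∀ a : L, ‖autL a‖ = ‖a‖)
    (Finv : ℤ → L) (hFinvE : IsE Finv) (hFinv : mulE (FE p) Finv = oneE)
    (a : ℕ → ℤ → L) (haE : ∀ i ∈ Finset.Icc 1 p, IsE (a i))
    (hmin : powE (tpowE (-1 : ℤ)) p
        + ∑ i ∈ Finset.Icc 1 p,
            mulE (nuF p autL Finv (a i)) (powE (tpowE (-1 : ℤ)) (p - i)) = 0) :
    (∃ z : ℤ → L, MemB p z ∧ a p = fun m => z (m + 1)) ∧
    ∀ i ∈ Finset.Icc 1 (p - 1), ∃ z : ℤ → L, MemB p z ∧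
      a i = fun m => (p : L) * z (m + (i : ℤ)) := by
  obtain ⟨⟨CF, hCF⟩, -⟩ := hFinvE
  have hC0 : (0:ℝ) ≤ max CF 0 := le_max_right _ _
  have hFb : ∀ j, ‖Finv j‖ ≤ max CF 0 := fun j => le_trans (hCF j) (le_max_left _ _)
  have hniceF : ∀ n : ℤ, IsNice p ((p : ℤ) * n) (zpowE (FE p) Finv n) :=
    aux_nice_zpow hp hp3 hpL hFinv hC0 hFb
  have heq := fun m => aux_eq_at (p := p) hmin m
  have hCex : ∀ i ∈ Finset.Icc 1 p, ∃ Ci : ℝ, 0 ≤ Ci ∧ ∀ n : ℤ, ‖a i n‖ ≤ Ci := by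
    intro i hi
    obtain ⟨⟨Ci, hCi⟩, -⟩ := haE i hi
    exact ⟨max Ci 0, le_max_right _ _, fun n => le_trans (hCi n) (le_max_left _ _)⟩
  choose Cf hCf0 hCfb using hCex
  set C : ℝ := ∑ x ∈ (Finset.Icc 1 p).attach, Cf x.1 x.2 with hCdef
  have hC : 0 ≤ C := Finset.sum_nonneg fun x _ => hCf0 x.1 x.2
  have hCa : ∀ i ∈ Finset.Icc 1 p, ∀ n : ℤ, ‖a i n‖ ≤ C := by
    intro i hi n
    refine le_trans (hCfb i hi n) ?_
    exact Finset.single_le_sum (f := fun x : {x // x ∈ Finset.Icc 1 p} => Cf x.1 x.2)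
      (fun x _ => hCf0 x.1 x.2) (Finset.mem_attach _ ⟨i, hi⟩)
  have hfinal : ∀ i ∈ Finset.Icc 1 p, ∀ n : ℤ, ‖a i n‖ ≤ targ p ((p : ℤ) * n + i) := by
    intro i hi n
    refine aux_le_limit (C := C) (targ_nonneg hp3 _) (by positivity)
      (show (p:ℝ)⁻¹ < 1 by rw [inv_lt_one₀ (aux_p_pos hp3)]; exact aux_one_lt_p hp3) fun k => ?_
    exact aux_main hp hp3 hpL hautL hC hCa hniceF heq k i hi n
  have hvan : ∀ i ∈ Finset.Icc 1 p, ∀ n : ℤ, ¬ ((p:ℤ) - 1) ∣ ((p:ℤ) * n + i) → a i n = 0 := by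
    intro i hi n hnd
    have h1 := hfinal i hi n
    rw [targ, if_neg hnd] at h1
    exact norm_le_zero_iff.1 h1
  have hppos := aux_p_pos hp3
  have hpIcc : p ∈ Finset.Icc 1 p := by rw [Finset.mem_Icc]; omega
  constructor
  · refine ⟨fun j => a p (j - 1), ⟨?_, ?_, ?_⟩, ?_⟩
    · obtain ⟨⟨Cp, hCp⟩, hlim⟩ := haE p hpIcc
      refine ⟨⟨Cp, fun n => hCp _⟩, fun ε hε => ?_⟩
      obtain ⟨N, hN⟩ := hlim ε hε
      exact ⟨N + 1, fun n hn => hN _ (by omega)⟩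
    · intro j hj
      refine hvan p hpIcc (j - 1) ?_
      intro hdvd
      refine hj ?_
      have h2 : (p:ℤ) * (j - 1) + p = ((p:ℤ) - 1) * j + j := by ring
      rw [h2] at hdvd
      exact (dvd_add_right ⟨j, rfl⟩).1 hdvd
    · intro κ
      have h1 := hfinal p hpIcc (((p:ℤ) - 1) * κ - 1)
      have h2 : (p:ℤ) * (((p:ℤ) - 1) * κ - 1) + p = ((p:ℤ) - 1) * ((p:ℤ) * κ) := by ring
      rw [h2, aux_targ_div hp3, aux_gg_mul hp3] at h1
      exact h1
    · funext m
      simp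
  · intro i hi
    rw [Finset.mem_Icc] at hi
    have hiIcc : i ∈ Finset.Icc 1 p := by rw [Finset.mem_Icc]; omega
    have hilt : i < p := by omega
    have hpne : (p : L) ≠ 0 := by
      intro h0
      rw [h0, norm_zero] at hpL
      exact absurd hpL.symm (by positivity)
    have hpinv : ‖((p : L))⁻¹‖ = (p : ℝ) := by rw [norm_inv, hpL, inv_inv]
    refine ⟨fun j => (p : L)⁻¹ * a i (j - i), ⟨?_, ?_, ?_⟩, ?_⟩
    · obtain ⟨⟨Ci, hCi⟩, hlim⟩ := haE i hiIcc
      constructor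
      · refine ⟨(p:ℝ) * max Ci 0, fun n => ?_⟩
        rw [norm_mul, hpinv]
        exact mul_le_mul_of_nonneg_left (le_trans (hCi _) (le_max_left _ _)) (le_of_lt hppos)
      · intro ε hε
        obtain ⟨N, hN⟩ := hlim (ε / p) (by positivity)
        refine ⟨N + i, fun n hn => ?_⟩
        rw [norm_mul, hpinv]
        calc (p:ℝ) * ‖a i (n - i)‖ ≤ (p:ℝ) * (ε / p) :=
              mul_le_mul_of_nonneg_left (hN _ (by omega)) (le_of_lt hppos)
          _ = ε := by field_simp
    · intro j hj
      have h0 : a i (j - i) = 0 := by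
        refine hvan i hiIcc (j - i) ?_
        intro hdvd
        refine hj ?_
        have h2 : (p:ℤ) * (j - i) + i = ((p:ℤ) - 1) * (j - i) + j := by ring
        rw [h2] at hdvd
        exact (dvd_add_right ⟨j - i, rfl⟩).1 hdvd
      show (p : L)⁻¹ * a i (j - i) = 0
      rw [h0, mul_zero]
    · intro κ
      have h1 := hfinal i hiIcc (((p:ℤ) - 1) * κ - i)
      have h2 : (p:ℤ) * (((p:ℤ) - 1) * κ - i) + i = ((p:ℤ) - 1) * ((p:ℤ) * κ - i) := by
        push_cast
        ring
      rw [h2, aux_targ_div hp3, aux_gg_nondiv hp3 κ (by omega) hilt] at h1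
      show ‖(p : L)⁻¹ * a i (((p:ℤ) - 1) * κ - i)‖ ≤ _
      rw [norm_mul, hpinv]
      calc (p:ℝ) * ‖a i (((p:ℤ) - 1) * κ - i)‖
          ≤ (p:ℝ) * (p:ℝ) ^ (-(1 + max 0 (-κ))) :=
            mul_le_mul_of_nonneg_left h1 (le_of_lt hppos)
        _ = (p:ℝ) ^ (-(max 0 (-κ))) := by
            have hm : (p:ℝ) * (p:ℝ) ^ (-(1 + max 0 (-κ)))
                = (p:ℝ) ^ (-(-1:ℤ)) * (p:ℝ) ^ (-(1 + max 0 (-κ))) := by norm_num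
            rw [hm, aux_wt_mul hp3]
            congr 1
            ring
    · funext m
      show a i m = (p : L) * ((p : L)⁻¹ * a i (m + i - i))
      rw [show m + (i:ℤ) - i = m by ring]
      rw [← mul_assoc, mul_inv_cancel₀ hpne, one_mul]

end AmiceStmt
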